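/- Let o ∈ I, c > 0, and let f : I → I be a map such that f restricted to I ∩ [-1/2, o) is injective with |f(u) − f(v)| ≥ c|u − v| for all u, v ∈ I ∩ [-1/2, o), and f restricted to I ∩ (o, 1/2] is injective with |f(u) − f(v)| ≥ c|u − v| for all u, v ∈ I ∩ (o, 1/2]. Then for every Borel set J ⊆ ℝ and every integer m ≥ 0, the Lebesgue measure of I ∩ f^{-m}(J) is at most (2/c)^m · λ(J). -/

import Mathlib

open MeasureTheory Set Filter Topology
open scoped ENNReal

noncomputable section

/-- The interval `I = [-1/2, 1/2] ⊆ ℝ`. -/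
def I01 : Set ℝ := Set.Icc (-(1 / 2)) (1 / 2)

/-- Preimages under a `c`-expanding map shrink measure by at most `c⁻¹`. -/
lemma branch_bound (c : ℝ) (hc : 0 < c) (f : ℝ → ℝ) (B S : Set ℝ)
    (hexp : ∀ u ∈ B, ∀ v ∈ B, c * |u - v| ≤ |f u - f v|) :
    volume (B ∩ f ⁻¹' S) ≤ ENNReal.ofReal c⁻¹ * volume S := by
  set T := B ∩ f ⁻¹' S with hT
  set g := Function.invFunOn f B with hg
  have hinj : Set.InjOn f B := by
    intro u hu v hv huv
    have h1 := hexp u hu v hv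
    rw [huv, sub_self, abs_zero] at h1
    have h2 := abs_nonneg (u - v)
    have : |u - v| = 0 := by nlinarith
    have := abs_eq_zero.mp this
    linarith [sub_eq_zero.mp this]
  have hlip : LipschitzOnWith (c⁻¹).toNNReal g (f '' B) := by
    apply LipschitzOnWith.of_dist_le_mul
    rintro x ⟨u, hu, rfl⟩ y ⟨v, hv, rfl⟩
    have hgu : g (f u) = u := hinj (Function.invFunOn_mem ⟨u, hu, rfl⟩) hu
      (Function.invFunOn_eq ⟨u, hu, rfl⟩)
    have hgv : g (f v) = v := hinj (Function.invFunOn_mem ⟨v, hv, rfl⟩) hv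
      (Function.invFunOn_eq ⟨v, hv, rfl⟩)
    rw [hgu, hgv, Real.dist_eq, Real.dist_eq]
    have h1 := hexp u hu v hv
    rw [Real.coe_toNNReal _ (inv_nonneg.mpr hc.le)]
    rw [inv_mul_eq_div, le_div_iff₀ hc]
    linarith [h1]
  have hTsub : T ⊆ g '' (f '' T) := by
    intro t ht
    refine ⟨f t, ⟨t, ht, rfl⟩, ?_⟩
    exact hinj (Function.invFunOn_mem ⟨t, ht.1, rfl⟩) ht.1
      (Function.invFunOn_eq ⟨t, ht.1, rfl⟩)
  calc volume T ≤ volume (g '' (f '' T)) := measure_mono hTsub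
    _ ≤ ENNReal.ofReal c⁻¹ * volume (f '' T) := by
        rw [← hausdorffMeasure_real]
        have := (hlip.mono (s := f '' T)
          (Set.image_mono Set.inter_subset_left)).hausdorffMeasure_image_le
          (d := 1) zero_le_one
        simpa [ENNReal.rpow_one, ENNReal.ofReal] using this
    _ ≤ ENNReal.ofReal c⁻¹ * volume S := by
        gcongr
        exact Set.image_subset_iff.mpr Set.inter_subset_right

/-- If `f : I → I` is injective and `c`-expanding on each of the two branches
`I ∩ [-1/2, o)` and `I ∩ (o, 1/2]`, then for every Borel set `J` and every `m ≥ 0` the Lebesgue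
measure of `I ∩ f^{-m}(J)` is at most `(2/c)^m · λ(J)`. -/
theorem measure_preimage_iterate_le
    (o c : ℝ) (ho : o ∈ I01) (hc : 0 < c)
    (f : ℝ → ℝ) (hmaps : Set.MapsTo f I01 I01)
    (hinjL : Set.InjOn f (I01 ∩ Set.Ico (-(1 / 2)) o))
    (hexpL : ∀ u ∈ I01 ∩ Set.Ico (-(1 / 2)) o, ∀ v ∈ I01 ∩ Set.Ico (-(1 / 2)) o,
      c * |u - v| ≤ |f u - f v|)
    (hinjR : Set.InjOn f (I01 ∩ Set.Ioc o (1 / 2)))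
    (hexpR : ∀ u ∈ I01 ∩ Set.Ioc o (1 / 2), ∀ v ∈ I01 ∩ Set.Ioc o (1 / 2),
      c * |u - v| ≤ |f u - f v|) :
    ∀ J : Set ℝ, MeasurableSet J → ∀ m : ℕ,
      volume (I01 ∩ f^[m] ⁻¹' J) ≤ ENNReal.ofReal ((2 / c) ^ m) * volume J := by
  intro J _ m
  -- One-step bound, for an arbitrary set `S`.
  have key : ∀ S : Set ℝ, volume (I01 ∩ f ⁻¹' S) ≤ ENNReal.ofReal (2 / c) * volume S := by
    intro S
    set L := I01 ∩ Set.Ico (-(1 / 2)) o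
    set R := I01 ∩ Set.Ioc o (1 / 2)
    have hsplit : I01 ∩ f ⁻¹' S ⊆ (L ∩ f ⁻¹' S) ∪ (R ∩ f ⁻¹' S) ∪ {o} := by
      intro x ⟨hx, hxS⟩
      rcases lt_trichotomy x o with h | h | h
      · exact Or.inl (Or.inl ⟨⟨hx, hx.1, h⟩, hxS⟩)
      · exact Or.inr h
      · exact Or.inl (Or.inr ⟨⟨hx, h, hx.2⟩, hxS⟩)
    calc volume (I01 ∩ f ⁻¹' S)
        ≤ volume ((L ∩ f ⁻¹' S) ∪ (R ∩ f ⁻¹' S) ∪ {o}) := measure_mono hsplit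
      _ ≤ volume (L ∩ f ⁻¹' S) + volume (R ∩ f ⁻¹' S) + volume ({o} : Set ℝ) := by
          refine le_trans (measure_union_le _ _) ?_
          gcongr
          exact measure_union_le _ _
      _ ≤ ENNReal.ofReal c⁻¹ * volume S + ENNReal.ofReal c⁻¹ * volume S + 0 := by
          gcongr
          · exact branch_bound c hc f L S hexpL
          · exact branch_bound c hc f R S hexpR
          · simp
      _ = ENNReal.ofReal (2 / c) * volume S := by
          rw [add_zero, ← add_mul, ← ENNReal.ofReal_add (by positivity) (by positivity)]
          congr 1
          field_simp
          ring
  induction m with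
  | zero =>
    simpa using measure_mono (Set.inter_subset_right : I01 ∩ J ⊆ J)
  | succ n ih =>
    have hiter : f^[n + 1] ⁻¹' J = f ⁻¹' (f^[n] ⁻¹' J) := by
      ext x
      simp [Function.iterate_succ_apply]
    have hsame : I01 ∩ f ⁻¹' (f^[n] ⁻¹' J) = I01 ∩ f ⁻¹' (I01 ∩ f^[n] ⁻¹' J) := by
      ext x
      constructor
      · rintro ⟨hx, hfx⟩
        exact ⟨hx, hmaps hx, hfx⟩
      · rintro ⟨hx, _, hfx⟩
        exact ⟨hx, hfx⟩
    calc volume (I01 ∩ f^[n + 1] ⁻¹' J)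
        = volume (I01 ∩ f ⁻¹' (I01 ∩ f^[n] ⁻¹' J)) := by rw [hiter, hsame]
      _ ≤ ENNReal.ofReal (2 / c) * volume (I01 ∩ f^[n] ⁻¹' J) := key _
      _ ≤ ENNReal.ofReal (2 / c) * (ENNReal.ofReal ((2 / c) ^ n) * volume J) := by gcongr
      _ = ENNReal.ofReal ((2 / c) ^ (n + 1)) * volume J := by
          rw [← mul_assoc, ← ENNReal.ofReal_mul (by positivity), pow_succ, mul_comm ((2/c)^n)]
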